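/- Let R be a DGA over A, F a DG right R-module, C_• and D_• free graded A-modules with finite bases B and B′ (all degrees ≥ 0), m⁰ and m¹ twisting cocycles for (R, C_•) and (R, D_•), and ν⁰, ν¹ continuation cocycles from m⁰ to m¹, with induced chain maps Ψ_i^F : C_*(C_•,F) → C_*(D_•,F), Ψ_i^F(α⊗x) = Σ_{y∈B′} (α·ν^i_{x,y})⊗y, between the twisted complexes. Suppose a family (h_{x,y}) with h_{x,y} ∈ R_{|x|−|y|+1} satisfies ∂h_{x,y} = ν¹_{x,y} − ν⁰_{x,y} + Σ_{z∈B} (−1)^{|x|−|z|} m⁰_{x,z} h_{z,y} + Σ_{w∈B′} (−1)^{|x|−|w|} h_{x,w} m¹_{w,y} for all x, y. Then the degree +1 map h^F(α⊗x) := (−1)^{|α|} Σ_{y∈B′} (α·h_{x,y}) ⊗ y is a chain homotopy from Ψ₀^F to Ψ₁^F, i.e. Ψ₁^F − Ψ₀^F = ∂^D ∘ h^F + h^F ∘ ∂^C, where ∂^C and ∂^D denote the twisted differentials. -/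

import Mathlib

/-- If a family `h x y ∈ R_{|x|-|y|+1}` satisfies the algebraic homotopy equation
relating two continuation cocycles `ν₀`, `ν₁`, then for every DG right `R`-module `F` the
degree `+1` map `hF (α ⊗ x) = (-1)^{|α|} ∑ y (α · h x y) ⊗ y` is a chain homotopy between
the induced chain maps `Ψ₀`, `Ψ₁` on the twisted complexes: `Ψ₁ - Ψ₀ = DD ∘ hF + hF ∘ DC`. -/
theorem statement5
    {A : Type*} [CommRing A] {R : Type*} [Ring R] [Algebra A R]
    (ℛ : ℤ → Submodule A R) [GradedRing ℛ]
    (d : R →ₗ[A] R)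
    (hd_mem : ∀ i : ℤ, ∀ a ∈ ℛ i, d a ∈ ℛ (i - 1))
    (hd_sq : ∀ a : R, d (d a) = 0)
    (hd_leibniz : ∀ i : ℤ, ∀ a ∈ ℛ i, ∀ b : R,
      d (a * b) = d a * b + (Int.negOnePow i : ℤ) • (a * d b))
    {F : Type*} [AddCommGroup F] [Module A F]
    (ℱ : ℤ → Submodule A F) [DirectSum.Decomposition ℱ]
    (dF : F →ₗ[A] F)
    (hdF_mem : ∀ i : ℤ, ∀ f ∈ ℱ i, dF f ∈ ℱ (i - 1))
    (hdF_sq : ∀ f : F, dF (dF f) = 0)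
    (act : F →ₗ[A] R →ₗ[A] F)
    (hact_one : ∀ f : F, act f 1 = f)
    (hact_mul : ∀ (f : F) (a b : R), act (act f a) b = act f (a * b))
    (hact_mem : ∀ (i j : ℤ), ∀ f ∈ ℱ i, ∀ a ∈ ℛ j, act f a ∈ ℱ (i + j))
    (hact_leibniz : ∀ i : ℤ, ∀ f ∈ ℱ i, ∀ a : R,
      dF (act f a) = act (dF f) a + (Int.negOnePow i : ℤ) • act f (d a))
    {B : Type*} [Fintype B] [DecidableEq B]
    (degB : B → ℤ) (hdegB : ∀ x : B, 0 ≤ degB x)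
    {B' : Type*} [Fintype B'] [DecidableEq B']
    (degB' : B' → ℤ) (hdegB' : ∀ y : B', 0 ≤ degB' y)
    (m₀ : B → B → R)
    (hm₀_mem : ∀ x y : B, m₀ x y ∈ ℛ (degB x - degB y - 1))
    (hm₀_zero : ∀ x y : B, ¬ degB y < degB x → m₀ x y = 0)
    (hm₀_mc : ∀ x y : B, d (m₀ x y) =
      ∑ z : B, (Int.negOnePow (degB x - degB z) : ℤ) • (m₀ x z * m₀ z y))
    (m₁ : B' → B' → R)
    (hm₁_mem : ∀ w y : B', m₁ w y ∈ ℛ (degB' w - degB' y - 1))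
    (hm₁_zero : ∀ w y : B', ¬ degB' y < degB' w → m₁ w y = 0)
    (hm₁_mc : ∀ w y : B', d (m₁ w y) =
      ∑ u : B', (Int.negOnePow (degB' w - degB' u) : ℤ) • (m₁ w u * m₁ u y))
    (ν₀ ν₁ : B → B' → R)
    (hν₀_mem : ∀ (x : B) (y : B'), ν₀ x y ∈ ℛ (degB x - degB' y))
    (hν₀_eq : ∀ (x : B) (y : B'), d (ν₀ x y) =
      (∑ z : B, m₀ x z * ν₀ z y) -
        ∑ w : B', (Int.negOnePow (degB x - degB' w) : ℤ) • (ν₀ x w * m₁ w y))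
    (hν₁_mem : ∀ (x : B) (y : B'), ν₁ x y ∈ ℛ (degB x - degB' y))
    (hν₁_eq : ∀ (x : B) (y : B'), d (ν₁ x y) =
      (∑ z : B, m₀ x z * ν₁ z y) -
        ∑ w : B', (Int.negOnePow (degB x - degB' w) : ℤ) • (ν₁ x w * m₁ w y))
    (DC : (B → F) →ₗ[A] (B → F))
    (hDC : ∀ i : ℤ, ∀ f ∈ ℱ i, ∀ x : B,
      DC (Pi.single x f) = Pi.single x (dF f) +
        (Int.negOnePow i : ℤ) • (fun z : B => act f (m₀ x z)))
    (DD : (B' → F) →ₗ[A] (B' → F))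
    (hDD : ∀ i : ℤ, ∀ f ∈ ℱ i, ∀ w : B',
      DD (Pi.single w f) = Pi.single w (dF f) +
        (Int.negOnePow i : ℤ) • (fun y : B' => act f (m₁ w y)))
    (Ψ₀ : (B → F) →ₗ[A] (B' → F))
    (hΨ₀ : ∀ (f : F) (x : B), Ψ₀ (Pi.single x f) = fun y : B' => act f (ν₀ x y))
    (Ψ₁ : (B → F) →ₗ[A] (B' → F))
    (hΨ₁ : ∀ (f : F) (x : B), Ψ₁ (Pi.single x f) = fun y : B' => act f (ν₁ x y))
    (h : B → B' → R)
    (hh_mem : ∀ (x : B) (y : B'), h x y ∈ ℛ (degB x - degB' y + 1))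
    (hh_eq : ∀ (x : B) (y : B'),
      d (h x y) = ν₁ x y - ν₀ x y +
        (∑ z : B, (Int.negOnePow (degB x - degB z) : ℤ) • (m₀ x z * h z y)) +
        ∑ w : B', (Int.negOnePow (degB x - degB' w) : ℤ) • (h x w * m₁ w y))
    (hF : (B → F) →ₗ[A] (B' → F))
    (hhF : ∀ i : ℤ, ∀ f ∈ ℱ i, ∀ x : B,
      hF (Pi.single x f) = (Int.negOnePow i : ℤ) • (fun y : B' => act f (h x y))) :
    Ψ₁ - Ψ₀ = DD ∘ₗ hF + hF ∘ₗ DC := by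

  classical
  -- sign helpers (coerced to ℤ)
  have hεmul : ∀ a b : ℤ, (Int.negOnePow a : ℤ) * (Int.negOnePow b : ℤ)
      = (Int.negOnePow (a + b) : ℤ) := by
    intro a b; rw [Int.negOnePow_add]; push_cast; ring
  have hεsq : ∀ a : ℤ, (Int.negOnePow a : ℤ) * (Int.negOnePow a : ℤ) = 1 := by
    intro a; rw [hεmul, show a + a = 2 * a by ring, Int.negOnePow_two_mul]; rfl
  have key : ∀ (i : ℤ), ∀ f ∈ ℱ i, ∀ x : B,
      (Ψ₁ - Ψ₀) (Pi.single x f) = (DD ∘ₗ hF + hF ∘ₗ DC) (Pi.single x f) := by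
    intro i f hf x
    have memh : ∀ w : B', act f (h x w) ∈ ℱ (i + (degB x - degB' w + 1)) :=
      fun w => hact_mem _ _ f hf _ (hh_mem x w)
    have memm : ∀ z : B, act f (m₀ x z) ∈ ℱ (i + (degB x - degB z - 1)) :=
      fun z => hact_mem _ _ f hf _ (hm₀_mem x z)
    have e1 : hF (Pi.single x f)
        = (Int.negOnePow i : ℤ) • ∑ w : B', Pi.single w (act f (h x w)) := by
      rw [hhF i f hf x]; congr 1; funext y
      simp only [Finset.sum_apply]
      exact (Fintype.sum_pi_single y (fun w => act f (h x w))).symm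
    have e2 : DD (hF (Pi.single x f))
        = (Int.negOnePow i : ℤ) • ∑ w : B',
            (Pi.single w (dF (act f (h x w))) +
              (Int.negOnePow (i + (degB x - degB' w + 1)) : ℤ) •
                (fun y : B' => act (act f (h x w)) (m₁ w y))) := by
      rw [e1, map_zsmul, map_sum]
      congr 1
      exact Finset.sum_congr rfl fun w _ => hDD _ _ (memh w) w
    have e3 : hF (DC (Pi.single x f))
        = (Int.negOnePow (i - 1) : ℤ) • (fun y : B' => act (dF f) (h x y)) +
          (Int.negOnePow i : ℤ) • ∑ z : B,
            (Int.negOnePow (i + (degB x - degB z - 1)) : ℤ) •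
              (fun y : B' => act (act f (m₀ x z)) (h z y)) := by
      rw [hDC i f hf x, map_add, map_zsmul, hhF (i - 1) (dF f) (hdF_mem i f hf) x]
      congr 2
      have e4 : (fun z : B => act f (m₀ x z)) = ∑ z : B, Pi.single z (act f (m₀ x z)) := by
        funext z; simp only [Finset.sum_apply]
        exact (Fintype.sum_pi_single z (fun c => act f (m₀ x c))).symm
      rw [e4, map_sum]
      exact Finset.sum_congr rfl fun z _ => hhF _ _ (memm z) z
    simp only [LinearMap.sub_apply, LinearMap.add_apply, LinearMap.coe_comp,
      Function.comp_apply, e2, e3, hΨ₀, hΨ₁]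
    funext y
    simp only [Pi.add_apply, Pi.sub_apply, Pi.smul_apply, Finset.sum_apply,
      Finset.sum_add_distrib, smul_add]
    rw [Fintype.sum_pi_single]
    have leib : dF (act f (h x y)) = act (dF f) (h x y)
        + (Int.negOnePow i : ℤ) • act f (d (h x y)) := hact_leibniz i f hf (h x y)
    have expand : act f (d (h x y)) = act f (ν₁ x y) - act f (ν₀ x y)
        + (∑ z : B, (Int.negOnePow (degB x - degB z) : ℤ) • act f (m₀ x z * h z y))
        + ∑ w : B', (Int.negOnePow (degB x - degB' w) : ℤ) • act f (h x w * m₁ w y) := by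
      rw [hh_eq x y, map_add, map_add, map_sub, map_sum, map_sum]
      simp only [map_zsmul]
    rw [leib, smul_add, smul_smul, hεsq, one_smul, expand]
    -- rewrite remaining sign-heavy sums
    have sumW : (Int.negOnePow i : ℤ) • (∑ w : B',
          (Int.negOnePow (i + (degB x - degB' w + 1)) : ℤ) •
            act (act f (h x w)) (m₁ w y))
        = - ∑ w : B', (Int.negOnePow (degB x - degB' w) : ℤ)
            • act f (h x w * m₁ w y) := by
      rw [Finset.smul_sum, ← Finset.sum_neg_distrib]
      refine Finset.sum_congr rfl fun w _ => ?_
      rw [smul_smul, hεmul, hact_mul,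
        show i + (i + (degB x - degB' w + 1)) = 2 * i + ((degB x - degB' w) + 1) by ring,
        Int.negOnePow_add, Int.negOnePow_two_mul, one_mul, Int.negOnePow_succ]
      push_cast
      rw [neg_smul]
    have sumZ : (Int.negOnePow i : ℤ) • (∑ z : B,
          (Int.negOnePow (i + (degB x - degB z - 1)) : ℤ) •
            act (act f (m₀ x z)) (h z y))
        = - ∑ z : B, (Int.negOnePow (degB x - degB z) : ℤ)
            • act f (m₀ x z * h z y) := by
      rw [Finset.smul_sum, ← Finset.sum_neg_distrib]
      refine Finset.sum_congr rfl fun z _ => ?_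
      rw [smul_smul, hεmul, hact_mul,
        show i + (i + (degB x - degB z - 1)) = 2 * i + ((degB x - degB z) + (-1)) by ring,
        Int.negOnePow_add, Int.negOnePow_two_mul, one_mul, Int.negOnePow_add]
      simp only [Int.negOnePow_neg, Int.negOnePow_one]
      push_cast
      rw [mul_neg, mul_one, neg_smul]
    have signI : (Int.negOnePow (i - 1) : ℤ) • act (dF f) (h x y)
        = - ((Int.negOnePow i : ℤ) • act (dF f) (h x y)) := by
      rw [show i - 1 = (i - 1 : ℤ) from rfl, sub_eq_add_neg, Int.negOnePow_add]
      simp only [Int.negOnePow_neg, Int.negOnePow_one]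
      push_cast
      rw [mul_neg, mul_one, neg_smul]
    rw [sumW, sumZ, signI]
    abel
  apply LinearMap.pi_ext
  intro x f
  induction f using DirectSum.Decomposition.inductionOn ℱ with
  | zero => simp
  | homogeneous m =>
      obtain ⟨f, hf⟩ := m
      exact key _ f hf x
  | add f g hfe hge =>
      have : (Pi.single x (f + g) : B → F) = Pi.single x f + Pi.single x g := by
        simp [Pi.single_add]
      rw [this, map_add, map_add, hfe, hge]
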